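/- arXiv:math/0003146 — 3 statements merged into one kernel-verified Lean document; each statement's English description precedes it below -/
import Mathlib

section
/- Define the q-commutator [u, e_i]_{a} = u e_i − a e_i u, and for a monomial u = e_{i_1}...e_{i_{p-1}} set a(u,i) = q_{i i_1}...q_{i i_{p-1}}. Then for all indices i, j and all homogeneous monomials u, ∂_j([u, e_i]_{a(u,i)}) = [∂_j u, e_i]_{a(u,i) q_{ji}}. -/
open scoped BigOperators

noncomputable section

/-- The free unital ℂ-algebra on `N` generators, realized as the monoid algebra
of the free monoid on `Fin N`. -/
abbrev FA (N : ℕ) : Type := MonoidAlgebra ℂ (FreeMonoid (Fin N))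

/-- The generator `e i`. -/
def gen {N : ℕ} (i : Fin N) : FA N :=
  MonoidAlgebra.of ℂ (FreeMonoid (Fin N)) (FreeMonoid.of i)

/-- The monomial `e_{i₁} ⋯ e_{iₙ}` attached to a word. -/
def mono {N : ℕ} (w : List (Fin N)) : FA N :=
  MonoidAlgebra.of ℂ (FreeMonoid (Fin N)) (FreeMonoid.ofList w)

/-- The q-differential on monomials: `∂ᵢ(e_j x) = δᵢⱼ x + qᵢⱼ e_j ∂ᵢ x`, `∂ᵢ 1 = 0`. -/
def Dword {N : ℕ} (q : Fin N → Fin N → ℂ) (i : Fin N) : List (Fin N) → FA N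
  | [] => 0
  | j :: w => (if i = j then mono w else 0) + q i j • (gen j * Dword q i w)

/-- The q-differential operator `∂ᵢ`, extended linearly from monomials. -/
def D {N : ℕ} (q : Fin N → Fin N → ℂ) (i : Fin N) (x : FA N) : FA N :=
  Finsupp.sum x.coeff fun w c => c • Dword q i (FreeMonoid.toList w)


/-- The commutation factor `a(u, i) = ∏_{r} q_{i i_r}` for a monomial `u = e_{i₁}⋯e_{iₚ₋₁}`. -/
def afac {N : ℕ} (q : Fin N → Fin N → ℂ) (i : Fin N) (w : List (Fin N)) : ℂ :=
  (w.map (q i)).prod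

/-- The q-commutator `[u, eᵢ]_a = u eᵢ − a eᵢ u`. -/
def qcomm {N : ℕ} (u : FA N) (i : Fin N) (a : ℂ) : FA N :=
  u * gen i - a • (gen i * u)


lemma mono_append {N : ℕ} (w v : List (Fin N)) : mono (w ++ v) = mono w * mono v := by
  simp [mono, ← map_mul]

lemma gen_eq {N : ℕ} (i : Fin N) : gen i = mono [i] := rfl

lemma D_mono {N : ℕ} (q : Fin N → Fin N → ℂ) (j : Fin N) (w : List (Fin N)) :
    D q j (mono w) = Dword q j w := by
  unfold D mono
  rw [MonoidAlgebra.of_apply, MonoidAlgebra.single, Finsupp.sum_single_index (by simp), one_smul]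
  rfl

lemma D_sub {N : ℕ} (q : Fin N → Fin N → ℂ) (j : Fin N) (x y : FA N) :
    D q j (x - y) = D q j x - D q j y := by
  unfold D
  rw [MonoidAlgebra.coeff_sub, Finsupp.sum_sub_index]
  intros; rw [sub_smul]

lemma D_smul {N : ℕ} (q : Fin N → Fin N → ℂ) (j : Fin N) (c : ℂ) (x : FA N) :
    D q j (c • x) = c • D q j x := by
  unfold D
  rw [MonoidAlgebra.coeff_smul, Finsupp.sum_smul_index (by simp), Finsupp.smul_sum]
  simp [mul_smul]

lemma Dword_append {N : ℕ} (q : Fin N → Fin N → ℂ) (j i : Fin N) (w : List (Fin N)) :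
    Dword q j (w ++ [i]) = Dword q j w * gen i +
      (if j = i then afac q j w • mono w else 0) := by
  induction w with
  | nil =>
      by_cases h : j = i <;> simp [Dword, afac, h, gen_eq, mono_append]
  | cons k w ih =>
      have hc : (k :: w) ++ [i] = k :: (w ++ [i]) := rfl
      rw [hc, show Dword q j (k :: (w ++ [i])) =
        (if j = k then mono (w ++ [i]) else 0) + q j k • (gen k * Dword q j (w ++ [i])) from rfl,
        ih]
      by_cases h : j = i <;> by_cases hk : j = k <;>
        simp [Dword, h, hk, afac, mul_add, smul_smul, mul_smul_comm, smul_mul_assoc, add_mul,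
          gen_eq, ← mono_append, mul_comm, mul_assoc, add_assoc]

/-- `∂_j [u, eᵢ]_{a(u,i)} = [∂_j u, eᵢ]_{a(u,i) q_{ji}}` for every monomial `u`. -/
theorem D_qcomm {N : ℕ} (q : Fin N → Fin N → ℂ) (hq : ∀ i j, q i j ≠ 0)
    (i j : Fin N) (w : List (Fin N)) :
    D q j (qcomm (mono w) i (afac q i w)) =
      qcomm (D q j (mono w)) i (afac q i w * q j i) := by
  have h1 : qcomm (mono w) i (afac q i w) =
      mono (w ++ [i]) - afac q i w • mono (i :: w) := by
    rw [qcomm, mono_append, ← gen_eq, show mono (i :: w) = gen i * mono w by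
      rw [gen_eq, ← mono_append]; rfl]
  rw [h1, D_sub, D_smul, D_mono, D_mono, D_mono, Dword_append,
    show Dword q j (i :: w) = (if j = i then mono w else 0) + q j i • (gen i * Dword q j w)
      from rfl, qcomm]
  by_cases h : j = i <;>
    simp [h, afac, smul_smul, smul_sub, mul_add, sub_smul, mul_comm, mul_assoc] <;>
    abel
end
end

section
/- For Q = {1,1,2} with three-letter words: assuming q_{11} q_{12} q_{21} = −1 (a solution of the cocycle condition (q_{11} q_{12} q_{21})² = 1 with q_{11} q_{12} q_{21} ≠ 1), and assuming there are no constants in degree two (i.e., q_{12} q_{21} ≠ 1 and q_{11} ≠ −1), there is no nonzero constant in the span of the monomials e_1e_1e_2, e_1e_2e_1, e_2e_1e_1. -/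
open scoped BigOperators

noncomputable section

lemma D_add {N : ℕ} (q : Fin N → Fin N → ℂ) (i : Fin N) (x y : FA N) :
    D q i (x + y) = D q i x + D q i y := by
  unfold D
  rw [MonoidAlgebra.coeff_add]
  exact Finsupp.sum_add_index' (fun w => zero_smul ℂ _) (fun w a b => add_smul a b _)

lemma D_smul_mono {N : ℕ} (q : Fin N → Fin N → ℂ) (i : Fin N) (c : ℂ) (w : List (Fin N)) :
    D q i (c • mono w) = c • Dword q i w := by
  unfold D mono
  rw [MonoidAlgebra.of_apply]
  rw [show c • (MonoidAlgebra.single (FreeMonoid.ofList w) (1:ℂ)) = MonoidAlgebra.single (FreeMonoid.ofList w) c by simp [MonoidAlgebra.smul_single']]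
  rw [MonoidAlgebra.coeff_single]
  rw [Finsupp.sum_single_index (by simp)]
  simp [FreeMonoid.toList_ofList]

lemma gen_mul_mono {N : ℕ} (j : Fin N) (w : List (Fin N)) :
    gen j * mono w = mono (j :: w) := by
  unfold gen mono
  rw [← map_mul]
  rfl

lemma smul_mono {N : ℕ} (c : ℂ) (w : List (Fin N)) :
    c • mono w = MonoidAlgebra.single (FreeMonoid.ofList w) c := by
  unfold mono
  rw [MonoidAlgebra.of_apply]
  simp [MonoidAlgebra.smul_single']

lemma pair_zero {N : ℕ} {v w : List (Fin N)} (hvw : v ≠ w) (α β : ℂ)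
    (h : α • mono v + β • mono w = (0 : FA N)) : α = 0 ∧ β = 0 := by
  rw [smul_mono, smul_mono] at h
  have h2 : (Finsupp.single (FreeMonoid.ofList v) α + Finsupp.single (FreeMonoid.ofList w) β
      : FreeMonoid (Fin N) →₀ ℂ) = 0 := congrArg MonoidAlgebra.coeff h
  have hk : FreeMonoid.ofList v ≠ FreeMonoid.ofList w := fun h => hvw (FreeMonoid.ofList.injective h)
  constructor
  · have := DFunLike.congr_fun h2 (FreeMonoid.ofList v)
    simpa [Finsupp.single_apply, hk, hk.symm] using this
  · have := DFunLike.congr_fun h2 (FreeMonoid.ofList w)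
    simpa [Finsupp.single_apply, hk, hk.symm] using this

lemma single_zero {N : ℕ} {w : List (Fin N)} (α : ℂ)
    (h : α • mono w = (0 : FA N)) : α = 0 := by
  rw [smul_mono] at h
  have h2 : (Finsupp.single (FreeMonoid.ofList w) α : FreeMonoid (Fin N) →₀ ℂ) = 0 := congrArg MonoidAlgebra.coeff h
  have := DFunLike.congr_fun h2 (FreeMonoid.ofList w)
  simpa using this


/-- for `Q = {1,1,2}`, if `q₁₁ q₁₂ q₂₁ = −1` (so the cocycle condition
`(q₁₁q₁₂q₂₁)² = 1` holds but `q₁₁q₁₂q₂₁ ≠ 1`), and there are no constants in degree two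
(`q₁₂ q₂₁ ≠ 1` and `q₁₁ ≠ −1`), then there is no nonzero constant in the span of
`e₁e₁e₂, e₁e₂e₁, e₂e₁e₁`.  (Indices: `e₁ = gen 0`, `e₂ = gen 1`.) -/
theorem no_constant_112 {q : Fin 2 → Fin 2 → ℂ} (hq : ∀ i j, q i j ≠ 0)
    (hcoc : q 0 0 * (q 0 1 * q 1 0) = -1)
    (h12 : q 0 1 * q 1 0 ≠ 1) (h11 : q 0 0 ≠ -1) :
    ∀ c₁ c₂ c₃ : ℂ,
      D q 0 (c₁ • mono [0, 0, 1] + c₂ • mono [0, 1, 0] + c₃ • mono [1, 0, 0]) = 0 →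
      D q 1 (c₁ • mono [0, 0, 1] + c₂ • mono [0, 1, 0] + c₃ • mono [1, 0, 0]) = 0 →
      c₁ • mono [0, 0, 1] + c₂ • mono [0, 1, 0] + c₃ • (mono [1, 0, 0] : FA 2) = 0 := by
  intro c₁ c₂ c₃ h1 h2
  rw [D_add, D_add, D_smul_mono, D_smul_mono, D_smul_mono] at h1 h2
  simp only [Dword, show ((0:Fin 2) = 1) = False by simp, show ((1:Fin 2) = 0) = False by simp,
    if_false, if_true, eq_self_iff_true, mul_zero, smul_zero, add_zero, zero_add, smul_add,
    smul_smul, gen_mul_mono, mul_add, mul_smul_comm] at h1 h2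
  have E12 : (c₁ + c₁ * q 0 0 + c₂ * (q 0 0 * q 0 1)) • mono [0, 1]
      + (c₂ + (c₃ * q 0 1 + c₃ * (q 0 1 * q 0 0))) • (mono [1, 0] : FA 2) = 0 := by
    rw [← h1]; module
  have E3' : (c₁ * (q 1 0 * q 1 0) + c₂ * q 1 0 + c₃) • (mono [0, 0] : FA 2) = 0 := by
    rw [← h2]; module
  obtain ⟨E1, E2⟩ := pair_zero (by decide) _ _ E12
  have E3 := single_zero _ E3'
  have ha : (1 + q 0 0) ≠ 0 := fun h => h11 (by linear_combination h)
  have hr : (1 - q 0 1 * q 1 0) ≠ 0 := fun h => h12 (by linear_combination -h)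
  have key : c₃ * ((1 + q 0 0) * (2 * (1 - q 0 1 * q 1 0))) = 0 := by
    linear_combination (1 + q 0 0) * E3 - (q 1 0 * q 1 0) * E1
      + (q 0 0 * q 0 1 * q 1 0 * q 1 0 - q 1 0 * (1 + q 0 0)) * E2
      + c₃ * (1 + q 0 0) * (1 - q 0 1 * q 1 0) * hcoc
  have hc3 : c₃ = 0 := by
    rcases mul_eq_zero.mp key with h | h
    · exact h
    · exact absurd h (mul_ne_zero ha (mul_ne_zero two_ne_zero hr))
  have hc2 : c₂ = 0 := by linear_combination E2 - (q 0 1 + q 0 1 * q 0 0) * hc3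
  have hc1 : c₁ = 0 := by
    have h0 : c₁ * (1 + q 0 0) = 0 := by linear_combination E1 - q 0 0 * q 0 1 * hc2
    rcases mul_eq_zero.mp h0 with h | h
    · exact h
    · exact absurd h ha
  simp [hc1, hc2, hc3]
end
end

section
/- Substitution lemma: let φ : {1,...,n} → {1,...,k} be a surjection with |φ^{-1}(i)| = n_i, and set q'_{i'j'} := q_{φ(i')φ(j')}. Let B' be the free algebra on e'_1,...,e'_n with parameters q' and B the free algebra on e_1,...,e_k with parameters q, and let Φ : B' → B be the algebra map e'_{i'} ↦ e_{φ(i')}. Then Φ intertwines the differentials: ∂_i ∘ Φ = Φ ∘ (Σ_{i' ∈ φ^{-1}(i)} ∂'_{i'}) on B'. In particular, if C' ∈ B' is a constant, then Φ(C') is a constant in B. -/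
open scoped BigOperators

noncomputable section

/-- The substitution homomorphism `Φ : B' → B`, `e'_{i'} ↦ e_{φ(i')}`. -/
def Phi {n k : ℕ} (φ : Fin n → Fin k) (x : FA n) : FA k :=
  MonoidAlgebra.ofCoeff (Finsupp.mapDomain (FreeMonoid.map φ) x.coeff)


section Aux

variable {n k : ℕ} (φ : Fin n → Fin k)

/-- `Phi` as a linear map. -/
def PhiL : FA n →ₗ[ℂ] FA k := MonoidAlgebra.mapDomainLinearMap ℂ ℂ (FreeMonoid.map φ)

lemma Phi_eq (x : FA n) : Phi φ x = PhiL φ x := rfl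

lemma Phi_mono (w : List (Fin n)) : Phi φ (mono w) = mono (w.map φ) := by
  change MonoidAlgebra.mapDomain _ _ = _
  simp only [mono, MonoidAlgebra.of_apply, MonoidAlgebra.mapDomain_single]
  rfl

lemma Phi_gen (j : Fin n) : Phi φ (gen j) = gen (φ j) := by
  exact Phi_mono φ [j]

lemma Phi_mul (x y : FA n) : Phi φ (x * y) = Phi φ x * Phi φ y :=
  MonoidAlgebra.mapDomain_mul (FreeMonoid.map φ) x y

lemma key (q : Fin k → Fin k → ℂ) (i : Fin k) (w : List (Fin n)) :
    Dword q i (w.map φ) =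
      Phi φ (∑ i' ∈ Finset.univ.filter (fun i' => φ i' = i),
        Dword (fun i' j' => q (φ i') (φ j')) i' w) := by
  induction w with
  | nil =>
    simp only [List.map_nil, Dword, Finset.sum_const_zero, Phi_eq, map_zero]
  | cons j w ih =>
    simp only [List.map_cons, Dword]
    rw [Phi_eq, map_sum]
    have hsplit : ∀ i' : Fin n,
        PhiL φ ((if i' = j then mono w else 0)
            + q (φ i') (φ j) • (gen j * Dword (fun a b => q (φ a) (φ b)) i' w))
          = (if i' = j then mono (w.map φ) else 0)
            + q (φ i') (φ j) • (gen (φ j) *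
                PhiL φ (Dword (fun a b => q (φ a) (φ b)) i' w)) := by
      intro i'
      rw [map_add, map_smul, ← Phi_eq, ← Phi_eq, Phi_mul, Phi_gen]
      congr 1
      split
      · exact Phi_mono φ w
      · simp [Phi_eq]
    rw [Finset.sum_congr rfl (fun i' _ => hsplit i'), Finset.sum_add_distrib]
    congr 1
    · rw [Finset.sum_ite_eq' (Finset.univ.filter (fun i' => φ i' = i)) j
        (fun _ => mono (w.map φ))]
      simp only [Finset.mem_filter, Finset.mem_univ, true_and]
      by_cases h : φ j = i
      · simp [h]
      · simp [h, Ne.symm h]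
    · have : ∀ i' ∈ Finset.univ.filter (fun i' => φ i' = i),
          q (φ i') (φ j) • (gen (φ j) * PhiL φ (Dword (fun a b => q (φ a) (φ b)) i' w))
            = q i (φ j) • (gen (φ j) * PhiL φ (Dword (fun a b => q (φ a) (φ b)) i' w)) := by
        intro i' hi'
        simp only [Finset.mem_filter] at hi'
        rw [hi'.2]
      rw [Finset.sum_congr rfl this, ← Finset.smul_sum, ← Finset.mul_sum, ← map_sum,
        ← Phi_eq, ← ih]

end Aux

/-- substitution lemma: let `φ` be a surjection with fibres of cardinalities
`m i`, and `q'_{i'j'} := q_{φ(i')φ(j')}`.  Then `Φ` intertwines the differentials: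
`∂ᵢ ∘ Φ = Φ ∘ (Σ_{i' ∈ φ⁻¹(i)} ∂'_{i'})`; in particular constants map to constants. -/

theorem substitution_lemma {n k : ℕ} (φ : Fin n → Fin k) (hφ : Function.Surjective φ)
    (m : Fin k → ℕ) (hm : ∀ i, Nat.card {i' : Fin n // φ i' = i} = m i)
    (q : Fin k → Fin k → ℂ) (hq : ∀ i j, q i j ≠ 0) :
    (∀ (i : Fin k) (x : FA n),
      D q i (Phi φ x) =
        Phi φ (∑ i' ∈ Finset.univ.filter (fun i' => φ i' = i),
          D (fun i' j' => q (φ i') (φ j')) i' x)) ∧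
    (∀ C : FA n, (∀ i', D (fun i' j' => q (φ i') (φ j')) i' C = 0) →
      ∀ i, D q i (Phi φ C) = 0) := by
  have main : ∀ (i : Fin k) (x : FA n),
      D q i (Phi φ x) =
        Phi φ (∑ i' ∈ Finset.univ.filter (fun i' => φ i' = i),
          D (fun i' j' => q (φ i') (φ j')) i' x) := by
    intro i x
    have hL : D q i (Phi φ x) =
        Finsupp.sum x.coeff fun w c => c • Dword q i ((FreeMonoid.map φ w).toList) := by
      unfold D Phi
      exact Finsupp.sum_mapDomain_index (by intro a; simp) (by intro a b₁ b₂; rw [add_smul])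
    rw [hL]
    have hR : Phi φ (∑ i' ∈ Finset.univ.filter (fun i' => φ i' = i),
          D (fun i' j' => q (φ i') (φ j')) i' x)
        = Finsupp.sum x.coeff fun w c => c •
            Phi φ (∑ i' ∈ Finset.univ.filter (fun i' => φ i' = i),
              Dword (fun i' j' => q (φ i') (φ j')) i' (FreeMonoid.toList w)) := by
      rw [Phi_eq, map_sum]
      unfold D
      rw [Finset.sum_congr rfl (fun i' _ => map_finsuppSum (PhiL φ) x.coeff _)]
      unfold Finsupp.sum
      rw [Finset.sum_comm]
      refine Finset.sum_congr rfl fun w _ => ?_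
      simp only [map_smul]
      rw [← Finset.smul_sum, Phi_eq, map_sum]
    rw [hR]
    refine Finsupp.sum_congr fun w _ => ?_
    congr 1
    rw [← key φ q i (FreeMonoid.toList w)]
    rfl
  refine ⟨main, fun C hC i => ?_⟩
  rw [main i C]
  have : (∑ i' ∈ Finset.univ.filter (fun i' => φ i' = i),
      D (fun i' j' => q (φ i') (φ j')) i' C) = 0 := by
    exact Finset.sum_eq_zero fun i' _ => hC i'
  rw [this, Phi_eq, map_zero]
end
end
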